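/- Let G be a simple connected graph with n ≥ 2 vertices and m edges, and write a_k = d(G,k). Then the betweenness centrality of the Mycielskian of G is B⁻(μ(G)) = (4n² − 2n − 7m − 4a_2 − a_3)/(2n + 1). -/

import Mathlib

open SimpleGraph Polynomial Finset

/-- The Mycielskian `μ(G)` of a simple graph `G`. Vertices `Sum.inl v` are the original
vertices `v_i`, vertices `Sum.inr (Sum.inl v)` are the shadow vertices `u_i`, and
`Sum.inr (Sum.inr ())` is the apex vertex `w`.  Edges: the edges of `G`, the edges `w u_i`,
and the edges `u_i v_j`, `u_j v_i` for every edge `v_i v_j` of `G`. -/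
def mycielskian {V : Type*} (G : SimpleGraph V) : SimpleGraph (V ⊕ V ⊕ Unit) :=
  SimpleGraph.fromRel (fun a b =>
    match a, b with
    | Sum.inl a, Sum.inl b => G.Adj a b
    | Sum.inl a, Sum.inr (Sum.inl b) => G.Adj a b
    | Sum.inr (Sum.inl _), Sum.inr (Sum.inr _) => True
    | _, _ => False)

/-- `distCount G k` is `d(G,k)`, the number of unordered pairs of distinct vertices of `G`
whose graph distance is exactly `k`. -/
noncomputable def distCount {V : Type*} (G : SimpleGraph V) (k : ℕ) : ℕ :=
  Nat.card {e : Sym2 V // ¬ e.IsDiag ∧ Sym2.lift ⟨G.dist, fun _ _ => G.dist_comm⟩ e = k}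

/-- The Hosoya polynomial `H(G,x) = Σ_{k=1}^{D(G)} d(G,k) x^k` (with rational coefficients). -/
noncomputable def hosoya {V : Type*} (G : SimpleGraph V) : Polynomial ℚ :=
  ∑ k ∈ Finset.Icc 1 G.diam, (distCount G k : ℚ) • Polynomial.X ^ k

/-- The Wiener index `W(G)`: the sum of distances over all unordered pairs of distinct
vertices (the diagonal contributes `0`, so we may sum over ordered pairs and halve). -/
noncomputable def wiener {V : Type*} (G : SimpleGraph V) [Fintype V] : ℚ :=
  (∑ u : V, ∑ v : V, (G.dist u v : ℚ)) / 2

/-- The Hyper-Wiener index `WW(G) = (1/2) Σ_{{u,v}} (d(u,v)² + d(u,v))`. -/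
noncomputable def hyperWiener {V : Type*} (G : SimpleGraph V) [Fintype V] : ℚ :=
  (∑ u : V, ∑ v : V, ((G.dist u v : ℚ) ^ 2 + (G.dist u v : ℚ))) / 4

/-- The TSZ index `TSZ(G) = (1/6) Σ_{{u,v}} d³ + (1/2) Σ_{{u,v}} d² + (1/3) Σ_{{u,v}} d`. -/
noncomputable def tszIndex {V : Type*} (G : SimpleGraph V) [Fintype V] : ℚ :=
  (∑ u : V, ∑ v : V, (G.dist u v : ℚ) ^ 3) / 12
    + (∑ u : V, ∑ v : V, (G.dist u v : ℚ) ^ 2) / 4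
    + (∑ u : V, ∑ v : V, (G.dist u v : ℚ)) / 6

/-- The Harary index `Har(G) = Σ_{{u,v}} 1/d(u,v)` (diagonal terms are `0⁻¹ = 0`). -/
noncomputable def harary {V : Type*} (G : SimpleGraph V) [Fintype V] : ℚ :=
  (∑ u : V, ∑ v : V, ((G.dist u v : ℚ))⁻¹) / 2

/-- The closeness `C(G) = Σ_u Σ_{v ≠ u} 2^{-d(u,v)}` over ordered pairs of distinct vertices. -/
noncomputable def closeness {V : Type*} (G : SimpleGraph V) [Fintype V] : ℚ :=
  letI := Classical.decEq V
  ∑ u : V, ∑ v : V, if v = u then 0 else ((1 : ℚ) / 2) ^ (G.dist u v)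

/-- `σ_{uv}`: the number of shortest paths (walks of length `dist u v`) from `u` to `v`. -/
noncomputable def numSP {V : Type*} (G : SimpleGraph V) (u v : V) : ℕ :=
  Nat.card {p : G.Walk u v // p.length = G.dist u v}

/-- `σ_{uv}(w)`: the number of shortest paths from `u` to `v` passing through `w`. -/
noncomputable def numSPthrough {V : Type*} (G : SimpleGraph V) (w u v : V) : ℕ :=
  Nat.card {p : G.Walk u v // p.length = G.dist u v ∧ w ∈ p.support}

/-- The betweenness centrality `B_w = Σ_{{u,v}, u ≠ w ≠ v} σ_{uv}(w)/σ_{uv}` of a vertex `w`,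
summed over unordered pairs of distinct vertices (ordered pairs, halved). -/
noncomputable def btwVertex {V : Type*} (G : SimpleGraph V) [Fintype V] (w : V) : ℚ :=
  letI := Classical.decEq V
  (∑ u : V, ∑ v : V,
    if u ≠ v ∧ u ≠ w ∧ v ≠ w then (numSPthrough G w u v : ℚ) / (numSP G u v) else 0) / 2

/-- The betweenness centrality of a graph: `B⁻(G) = (1/N) Σ_w B_w`. -/
noncomputable def btw {V : Type*} (G : SimpleGraph V) [Fintype V] : ℚ :=
  (∑ w : V, btwVertex G w) / (Fintype.card V)

/-- The star graph `S_n`: center `0` joined to the `n` leaves `1, …, n`. -/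
def starGraph (n : ℕ) : SimpleGraph (Fin (n + 1)) :=
  SimpleGraph.fromRel (fun a _ => a = 0)

/-- The join `G₁ ⊕ G₂` of two graphs on disjoint vertex sets: all edges of `G₁`, all edges
of `G₂`, and all edges between `V(G₁)` and `V(G₂)`. -/
def joinGraph {V₁ V₂ : Type*} (G₁ : SimpleGraph V₁) (G₂ : SimpleGraph V₂) :
    SimpleGraph (V₁ ⊕ V₂) :=
  SimpleGraph.fromRel (fun a b =>
    match a, b with
    | Sum.inl a, Sum.inl b => G₁.Adj a b
    | Sum.inr a, Sum.inr b => G₂.Adj a b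
    | Sum.inl _, Sum.inr _ => True
    | _, _ => False)

set_option linter.unusedSectionVars false

section Adj
variable {V : Type*} {G : SimpleGraph V}

@[simp] lemma madj_ll {a b : V} : (mycielskian G).Adj (Sum.inl a) (Sum.inl b) ↔ G.Adj a b := by
  constructor
  · rintro ⟨h1, h2 | h2⟩ <;> [exact h2; exact h2.symm]
  · intro h; exact ⟨by simp [h.ne], Or.inl h⟩

@[simp] lemma madj_lu {a b : V} :
    (mycielskian G).Adj (Sum.inl a) (Sum.inr (Sum.inl b)) ↔ G.Adj a b := by
  constructor
  · rintro ⟨h1, h2 | h2⟩ <;> [exact h2; exact h2.elim]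
  · intro h; exact ⟨by simp, Or.inl h⟩

@[simp] lemma madj_ul {a b : V} :
    (mycielskian G).Adj (Sum.inr (Sum.inl a)) (Sum.inl b) ↔ G.Adj a b := by
  rw [adj_comm, madj_lu, adj_comm]

@[simp] lemma madj_uw {a : V} {u : Unit} :
    (mycielskian G).Adj (Sum.inr (Sum.inl a)) (Sum.inr (Sum.inr u)) :=
  ⟨by simp, Or.inl trivial⟩

@[simp] lemma madj_wu {a : V} {u : Unit} :
    (mycielskian G).Adj (Sum.inr (Sum.inr u)) (Sum.inr (Sum.inl a)) := madj_uw.symm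

@[simp] lemma not_madj_uu {a b : V} :
    ¬ (mycielskian G).Adj (Sum.inr (Sum.inl a)) (Sum.inr (Sum.inl b)) := by
  rintro ⟨h1, h2 | h2⟩ <;> exact h2.elim

@[simp] lemma not_madj_lw {a : V} {u : Unit} :
    ¬ (mycielskian G).Adj (Sum.inl a) (Sum.inr (Sum.inr u)) := by
  rintro ⟨h1, h2 | h2⟩ <;> exact h2.elim

@[simp] lemma not_madj_wl {a : V} {u : Unit} :
    ¬ (mycielskian G).Adj (Sum.inr (Sum.inr u)) (Sum.inl a) := fun h => not_madj_lw h.symm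

@[simp] lemma not_madj_ww {u u' : Unit} :
    ¬ (mycielskian G).Adj (Sum.inr (Sum.inr u)) (Sum.inr (Sum.inr u')) := by
  rintro ⟨h1, h2 | h2⟩ <;> exact h1 rfl

end Adj

section Dist
variable {V : Type*} {G : SimpleGraph V}

/-- projection of non-apex vertices -/
def myproj (v0 : V) : V ⊕ V ⊕ Unit → V
  | Sum.inl a => a
  | Sum.inr (Sum.inl a) => a
  | Sum.inr (Sum.inr _) => v0

lemma adj_proj (v0 : V) {a b : V ⊕ V ⊕ Unit} (h : (mycielskian G).Adj a b)
    (ha : ∀ u, a ≠ Sum.inr (Sum.inr u)) (hb : ∀ u, b ≠ Sum.inr (Sum.inr u)) :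
    G.Adj (myproj v0 a) (myproj v0 b) := by
  match a, b with
  | Sum.inl a, Sum.inl b => simpa [myproj] using h
  | Sum.inl a, Sum.inr (Sum.inl b) => simpa [myproj] using h
  | Sum.inr (Sum.inl a), Sum.inl b => simpa [myproj] using h
  | Sum.inr (Sum.inl a), Sum.inr (Sum.inl b) => exact absurd h not_madj_uu
  | Sum.inr (Sum.inr u), _ => exact absurd rfl (ha u)
  | _, Sum.inr (Sum.inr u) => exact absurd rfl (hb u)

lemma proj_walk (v0 : V) {a b : V ⊕ V ⊕ Unit} (p : (mycielskian G).Walk a b)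
    (hw : ∀ u, Sum.inr (Sum.inr u) ∉ p.support) :
    ∃ q : G.Walk (myproj v0 a) (myproj v0 b), q.length = p.length := by
  induction p with
  | nil => exact ⟨SimpleGraph.Walk.nil, rfl⟩
  | cons h q ih =>
    rename_i x y z
    have hx : ∀ u, x ≠ Sum.inr (Sum.inr u) := by
      intro u hu; exact hw u (by rw [← hu]; exact SimpleGraph.Walk.start_mem_support _)
    have hy : ∀ u, y ≠ Sum.inr (Sum.inr u) := by
      intro u hu; exact hw u (by rw [← hu]; simp)
    obtain ⟨q', hq'⟩ := ih (fun u hu => hw u (by simp [hu]))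
    exact ⟨SimpleGraph.Walk.cons (adj_proj v0 h hx hy) q', by simp [hq']⟩

lemma proj_dist_le (v0 : V) {a b : V ⊕ V ⊕ Unit} (p : (mycielskian G).Walk a b)
    (hw : ∀ u, Sum.inr (Sum.inr u) ∉ p.support) :
    G.dist (myproj v0 a) (myproj v0 b) ≤ p.length := by
  obtain ⟨q, hq⟩ := proj_walk v0 p hw
  exact hq ▸ SimpleGraph.dist_le q

end Dist

section Dist2
variable {V : Type*} [Fintype V] {G : SimpleGraph V}

lemma exists_adj (hc : G.Connected) (h2 : 1 < Fintype.card V) (x : V) : ∃ y, G.Adj x y := by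
  obtain ⟨y, hy⟩ := Fintype.exists_ne_of_one_lt_card h2 x
  obtain ⟨p⟩ := hc x y
  cases p with
  | nil => exact absurd rfl hy.symm
  | cons h _ => exact ⟨_, h⟩

lemma dist_split {W : Type*} {H : SimpleGraph W} {a b c : W} (p : H.Walk a b)
    (h : c ∈ p.support) : H.dist a c + H.dist c b ≤ p.length := by
  classical
  calc H.dist a c + H.dist c b
      ≤ (p.takeUntil c h).length + (p.dropUntil c h).length :=
        add_le_add (H.dist_le _) (H.dist_le _)
    _ = p.length := by rw [← SimpleGraph.Walk.length_append, SimpleGraph.Walk.take_spec]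

lemma dist_eq_two' {W : Type*} {H : SimpleGraph W} {a b c : W} (h1 : H.Adj a c)
    (h2 : H.Adj c b) (hne : a ≠ b) (hnadj : ¬ H.Adj a b) : H.dist a b = 2 := by
  have hle : H.dist a b ≤ 2 := by
    simpa using H.dist_le (SimpleGraph.Walk.cons h1 (SimpleGraph.Walk.cons h2 SimpleGraph.Walk.nil))
  have h0 : H.dist a b ≠ 0 := fun h => hne <|
    (SimpleGraph.Reachable.dist_eq_zero_iff
      ⟨SimpleGraph.Walk.cons h1 (SimpleGraph.Walk.cons h2 SimpleGraph.Walk.nil)⟩).mp h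
  have hA : H.dist a b ≠ 1 := fun h => hnadj (SimpleGraph.dist_eq_one_iff_adj.mp h)
  omega

lemma lift_walk {i j : V} (p : G.Walk i j) :
    ∃ q : (mycielskian G).Walk (Sum.inl i) (Sum.inl j), q.length = p.length := by
  induction p with
  | nil => exact ⟨SimpleGraph.Walk.nil, rfl⟩
  | cons h _ ih =>
    obtain ⟨q, hq⟩ := ih
    exact ⟨SimpleGraph.Walk.cons (madj_ll.mpr h) q, by simp [hq]⟩

lemma dist_wu {i : V} {u : Unit} :
    (mycielskian G).dist (Sum.inr (Sum.inr u)) (Sum.inr (Sum.inl i)) = 1 :=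
  SimpleGraph.dist_eq_one_iff_adj.mpr madj_wu

lemma dist_wl (hc : G.Connected) (h2 : 1 < Fintype.card V) {j : V} {u : Unit} :
    (mycielskian G).dist (Sum.inr (Sum.inr u)) (Sum.inl j) = 2 := by
  obtain ⟨k, hk⟩ := exists_adj hc h2 j
  exact dist_eq_two' madj_wu (madj_ul.mpr hk.symm) (by simp) not_madj_wl

lemma dist_uu {i j : V} (hij : i ≠ j) :
    (mycielskian G).dist (Sum.inr (Sum.inl i)) (Sum.inr (Sum.inl j)) = 2 :=
  dist_eq_two' (madj_uw (u := ())) madj_wu (by simp [hij]) not_madj_uu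

lemma dist_uv_same (hc : G.Connected) (h2 : 1 < Fintype.card V) {i : V} :
    (mycielskian G).dist (Sum.inr (Sum.inl i)) (Sum.inl i) = 2 := by
  obtain ⟨k, hk⟩ := exists_adj hc h2 i
  exact dist_eq_two' (madj_ul.mpr hk) (madj_ll.mpr hk.symm) (by simp)
    (by simp [G.irrefl])

lemma dist_ll (hc : G.Connected) (h2 : 1 < Fintype.card V) {i j : V} (hij : i ≠ j) :
    (mycielskian G).dist (Sum.inl i) (Sum.inl j) = min (G.dist i j) 4 := by
  obtain ⟨k, hk⟩ := exists_adj hc h2 i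
  obtain ⟨l, hl⟩ := exists_adj hc h2 j
  -- the walk of length 4 through the apex
  let w4 : (mycielskian G).Walk (Sum.inl i) (Sum.inl j) :=
    SimpleGraph.Walk.cons (madj_lu.mpr hk) (SimpleGraph.Walk.cons (madj_uw (u := ()))
      (SimpleGraph.Walk.cons madj_wu (SimpleGraph.Walk.cons (madj_ul.mpr hl.symm)
        SimpleGraph.Walk.nil)))
  have hle4 : (mycielskian G).dist (Sum.inl i) (Sum.inl j) ≤ 4 := by
    simpa [w4] using (mycielskian G).dist_le w4
  have hled : (mycielskian G).dist (Sum.inl i) (Sum.inl j) ≤ G.dist i j := by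
    obtain ⟨p, hp⟩ := (hc i j).exists_walk_length_eq_dist
    obtain ⟨q, hq⟩ := lift_walk p
    have := (mycielskian G).dist_le q
    omega
  have hre : (mycielskian G).Reachable (Sum.inl i) (Sum.inl j) := ⟨w4⟩
  obtain ⟨p, hp⟩ := hre.exists_walk_length_eq_dist
  refine le_antisymm (le_min hled hle4) ?_
  rcases Classical.em (∃ u, Sum.inr (Sum.inr u) ∈ p.support) with happ | happ
  · obtain ⟨u, hu⟩ := happ
    have h1 := dist_split p hu
    rw [SimpleGraph.dist_comm (u := Sum.inl i)] at h1
    rw [dist_wl hc h2, dist_wl hc h2] at h1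
    exact le_trans (min_le_right _ _) (by omega)
  · push_neg at happ
    have hproj : G.dist i j ≤ p.length := proj_dist_le i p happ
    exact le_trans (min_le_left _ _) (by omega)

lemma dist_ul (hc : G.Connected) (h2 : 1 < Fintype.card V) {i j : V} (hij : i ≠ j) :
    (mycielskian G).dist (Sum.inr (Sum.inl i)) (Sum.inl j) = min (G.dist i j) 3 := by
  obtain ⟨l, hl⟩ := exists_adj hc h2 j
  let w3 : (mycielskian G).Walk (Sum.inr (Sum.inl i)) (Sum.inl j) :=
    SimpleGraph.Walk.cons (madj_uw (u := ())) (SimpleGraph.Walk.cons madj_wu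
      (SimpleGraph.Walk.cons (madj_ul.mpr hl.symm) SimpleGraph.Walk.nil))
  have hle3 : (mycielskian G).dist (Sum.inr (Sum.inl i)) (Sum.inl j) ≤ 3 := by
    simpa [w3] using (mycielskian G).dist_le w3
  have hled : (mycielskian G).dist (Sum.inr (Sum.inl i)) (Sum.inl j) ≤ G.dist i j := by
    obtain ⟨p, hp⟩ := (hc i j).exists_walk_length_eq_dist
    cases p with
    | nil => exact absurd rfl hij
    | cons h q =>
      obtain ⟨q', hq'⟩ := lift_walk q
      have hw := (mycielskian G).dist_le (SimpleGraph.Walk.cons (madj_ul.mpr h) q')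
      simp only [SimpleGraph.Walk.length_cons] at hw hp
      omega
  have hre : (mycielskian G).Reachable (Sum.inr (Sum.inl i)) (Sum.inl j) := ⟨w3⟩
  obtain ⟨p, hp⟩ := hre.exists_walk_length_eq_dist
  refine le_antisymm (le_min hled hle3) ?_
  rcases Classical.em (∃ u, Sum.inr (Sum.inr u) ∈ p.support) with happ | happ
  · obtain ⟨u, hu⟩ := happ
    have h1 := dist_split p hu
    rw [SimpleGraph.dist_comm (u := Sum.inr (Sum.inl i)), dist_wu, dist_wl hc h2] at h1
    exact le_trans (min_le_right _ _) (by omega)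
  · push_neg at happ
    have hproj : G.dist i j ≤ p.length := proj_dist_le i p happ
    exact le_trans (min_le_left _ _) (by omega)

end Dist2

section A
variable {W : Type*} [Fintype W] (H : SimpleGraph W)

lemma sum_numSPthrough [DecidableEq W] {u v : W} (huv : u ≠ v) (hr : H.Reachable u v) :
    ∑ w ∈ Finset.univ \ {u, v}, numSPthrough H w u v
      = (H.dist u v - 1) * numSP H u v := by
  classical
  letI : DecidableRel H.Adj := Classical.decRel _
  set d := H.dist u v with hd
  have hcard : ∀ w, numSPthrough H w u v =
      (Finset.univ.filter
        (fun x : {p : H.Walk u v // p.length = d} => w ∈ x.val.support)).card := by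
    intro w
    rw [numSPthrough]
    rw [Nat.card_congr (Equiv.subtypeSubtypeEquivSubtypeInter
      (fun p : H.Walk u v => p.length = d) (fun p => w ∈ p.support)).symm]
    rw [Nat.card_eq_fintype_card, Fintype.card_subtype]
  simp only [hcard, Finset.card_filter]
  rw [Finset.sum_comm]
  have hfib : ∀ x : {p : H.Walk u v // p.length = d},
      (∑ w ∈ Finset.univ \ {u, v}, if w ∈ x.val.support then 1 else 0) = d - 1 := by
    intro x
    rw [← Finset.card_filter]
    have hpath : x.val.IsPath := x.val.isPath_of_length_eq_dist x.prop
    have hset : (Finset.univ \ {u, v}).filter (fun w => w ∈ x.val.support)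
        = x.val.support.toFinset \ {u, v} := by
      ext w; simp [and_comm]
    rw [hset, Finset.card_sdiff_of_subset]
    · rw [List.toFinset_card_of_nodup hpath.support_nodup]
      rw [SimpleGraph.Walk.length_support, x.prop]
      rw [Finset.card_insert_of_notMem (by simp [huv]), Finset.card_singleton]
      omega
    · intro w hw
      simp only [Finset.mem_insert, Finset.mem_singleton] at hw
      rcases hw with rfl | rfl
      · simp [SimpleGraph.Walk.start_mem_support]
      · simp [SimpleGraph.Walk.end_mem_support]
  have hall := Finset.sum_congr rfl (fun x (_ : x ∈ (Finset.univ : Finset {p : H.Walk u v // p.length = d})) => hfib x)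
  rw [hall, Finset.sum_const, smul_eq_mul, numSP, Nat.card_eq_fintype_card,
    Finset.card_univ, mul_comm]

lemma sum_through [DecidableEq W] {u v : W} (huv : u ≠ v) (hr : H.Reachable u v) :
    ∑ w : W, (if u ≠ v ∧ u ≠ w ∧ v ≠ w then
        (numSPthrough H w u v : ℚ) / (numSP H u v) else 0)
      = (H.dist u v : ℚ) - 1 := by
  classical
  have hd1 : 1 ≤ H.dist u v := by
    rcases Nat.eq_zero_or_pos (H.dist u v) with h | h
    · exact absurd (hr.dist_eq_zero_iff.mp h) huv
    · omega
  letI : DecidableRel H.Adj := Classical.decRel _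
  have hσ : numSP H u v ≠ 0 := by
    obtain ⟨p, hp⟩ := hr.exists_walk_length_eq_dist
    have hne : Nonempty {p : H.Walk u v // p.length = H.dist u v} := ⟨⟨p, hp⟩⟩
    rw [numSP]
    exact Nat.card_pos.ne'
  rw [← Finset.sum_filter]
  have : Finset.univ.filter (fun w => u ≠ v ∧ u ≠ w ∧ v ≠ w) = Finset.univ \ {u, v} := by
    ext w; simp [huv]; tauto
  rw [this, ← Finset.sum_div, ← Nat.cast_sum, sum_numSPthrough H huv hr]
  rw [Nat.cast_mul, mul_div_assoc, div_self (by exact_mod_cast hσ), mul_one]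
  rw [Nat.cast_sub hd1, Nat.cast_one]

lemma btw_eq (hc : H.Connected) :
    btw H = ((∑ u : W, ∑ v : W, (H.dist u v : ℚ))
        - ((Fintype.card W : ℚ) ^ 2 - Fintype.card W)) / (2 * Fintype.card W) := by
  classical
  unfold _root_.btw btwVertex
  rw [← Finset.sum_div, div_div, mul_comm]
  congr 1
  rw [Finset.sum_comm]
  refine Eq.trans (Finset.sum_congr rfl fun u _ => Finset.sum_comm) ?_
  have hrow : ∀ u : W, (∑ v : W, ∑ w : W,
      if u ≠ v ∧ u ≠ w ∧ v ≠ w then (numSPthrough H w u v : ℚ) / (numSP H u v) else 0)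
      = ∑ v : W, ((H.dist u v : ℚ) - if u = v then 0 else 1) := by
    intro u
    refine Finset.sum_congr rfl fun v _ => ?_
    by_cases huv : u = v
    · subst huv; simp [SimpleGraph.dist_self]
    · rw [sum_through H huv (hc u v)]
      simp [huv]
  calc (∑ u : W, ∑ v : W, ∑ w : W,
      if u ≠ v ∧ u ≠ w ∧ v ≠ w then (numSPthrough H w u v : ℚ) / (numSP H u v) else 0)
      = ∑ u : W, ∑ v : W, ((H.dist u v : ℚ) - if u = v then 0 else 1) := by
        refine Finset.sum_congr rfl fun u _ => ?_
        rw [← hrow u]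
    _ = (∑ u : W, ∑ v : W, (H.dist u v : ℚ))
        - ((Fintype.card W : ℚ) ^ 2 - Fintype.card W) := by
        have h1 : ∀ u : W, (∑ v : W, if u = v then (0:ℚ) else 1)
            = (Fintype.card W : ℚ) - 1 := by
          intro u
          have hpt : ∀ v : W, (if u = v then (0:ℚ) else 1)
              = 1 - (if u = v then 1 else 0) := by
            intro v; by_cases h : u = v <;> simp [h]
          simp only [hpt, Finset.sum_sub_distrib, Finset.sum_const, Finset.card_univ,
            smul_eq_mul, mul_one]
          rw [Finset.sum_ite_eq]
          simp
        simp only [Finset.sum_sub_distrib]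
        congr 1
        refine Eq.trans (Finset.sum_congr rfl fun u _ => h1 u) ?_
        rw [Finset.sum_const, Finset.card_univ, nsmul_eq_mul]
        ring
end A

section C
variable {V : Type*} [Fintype V] [DecidableEq V] {G : SimpleGraph V}

lemma distCount_eq_card (k : ℕ) :
    distCount G k = (Finset.univ.filter
      (fun e : Sym2 V => ¬ e.IsDiag ∧
        Sym2.lift ⟨G.dist, fun _ _ => G.dist_comm⟩ e = k)).card := by
  classical
  rw [distCount, Nat.card_eq_fintype_card, Fintype.card_subtype]

lemma ordered_count {k : ℕ} (hk : k ≠ 0) :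
    (Finset.univ.filter (fun p : V × V => G.dist p.1 p.2 = k)).card
      = 2 * distCount G k := by
  classical
  rw [distCount_eq_card]
  set A := Finset.univ.filter (fun p : V × V => G.dist p.1 p.2 = k) with hA
  set B := Finset.univ.filter
      (fun e : Sym2 V => ¬ e.IsDiag ∧
        Sym2.lift ⟨G.dist, fun _ _ => G.dist_comm⟩ e = k) with hB
  have hmap : ∀ p ∈ A, s(p.1, p.2) ∈ B := by
    intro p hp
    simp only [hA, Finset.mem_filter, Finset.mem_univ, true_and] at hp
    have hne : p.1 ≠ p.2 := by
      intro h
      rw [h] at hp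
      rw [SimpleGraph.dist_self] at hp
      exact hk hp.symm
    simp only [hB, Finset.mem_filter, Finset.mem_univ, true_and]
    constructor
    · exact fun h => hne (Sym2.mk_isDiag_iff.mp h)
    · exact hp
  have hfib : ∀ e ∈ B, (A.filter (fun p => s(p.1, p.2) = e)).card = 2 := by
    intro e he
    induction e using Sym2.ind with
    | _ a b =>
      simp only [hB, Finset.mem_filter, Finset.mem_univ, true_and] at he
      obtain ⟨hdiag, hdist⟩ := he
      have hab : a ≠ b := fun h => hdiag (by simp [h])
      have hd : G.dist a b = k := by simpa using hdist
      have : A.filter (fun p => s(p.1, p.2) = s(a, b)) = {(a, b), (b, a)} := by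
        ext p
        simp only [Finset.mem_filter, Finset.mem_insert, Finset.mem_singleton, hA,
          Finset.mem_univ, true_and]
        constructor
        · rintro ⟨hp1, hp2⟩
          rcases Sym2.eq_iff.mp hp2 with ⟨h1, h2⟩ | ⟨h1, h2⟩
          · left; exact Prod.ext h1 h2
          · right; exact Prod.ext h1 h2
        · rintro (rfl | rfl)
          · exact ⟨hd, rfl⟩
          · exact ⟨by rwa [SimpleGraph.dist_comm], Sym2.eq_swap⟩
      rw [this, Finset.card_insert_of_notMem (by simp [hab, Prod.ext_iff]),
        Finset.card_singleton]
  rw [Finset.card_eq_sum_card_fiberwise (f := fun p : V × V => s(p.1, p.2)) hmap, Finset.sum_congr rfl hfib,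
    Finset.sum_const, smul_eq_mul, mul_comm]

lemma distCount_one_eq : distCount G 1 = Nat.card G.edgeSet := by
  apply Nat.card_congr
  apply Equiv.subtypeEquivRight
  intro e
  induction e using Sym2.ind with
  | _ a b =>
    simp only [Sym2.mk_isDiag_iff, Sym2.lift_mk, SimpleGraph.mem_edgeSet]
    rw [SimpleGraph.dist_eq_one_iff_adj]
    constructor
    · exact fun h => h.2
    · exact fun h => ⟨h.ne, h⟩

lemma sum_ite_dist (k : ℕ) :
    (∑ i : V, ∑ j : V, if G.dist i j = k then (1:ℚ) else 0)
      = ((Finset.univ.filter (fun p : V × V => G.dist p.1 p.2 = k)).card : ℚ) := by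
  rw [Finset.card_filter, Nat.cast_sum, Fintype.sum_prod_type]
  refine Finset.sum_congr rfl fun i _ => Finset.sum_congr rfl fun j _ => ?_
  by_cases h : G.dist i j = k <;> simp [h]

lemma sum_ite_ne (hc : G.Connected) :
    (∑ i : V, ∑ j : V, if G.dist i j = 0 then (0:ℚ) else 1)
      = (Fintype.card V : ℚ) ^ 2 - Fintype.card V := by
  have hpt : ∀ i j : V, (if G.dist i j = 0 then (0:ℚ) else 1)
      = 1 - (if i = j then 1 else 0) := by
    intro i j
    by_cases h : i = j
    · simp [h, SimpleGraph.dist_self]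
    · rw [if_neg (fun hd => h (hc.dist_eq_zero_iff.mp hd)), if_neg h]
      ring
  simp only [hpt, Finset.sum_sub_distrib, Finset.sum_const, Finset.card_univ,
    smul_eq_mul, mul_one, Finset.sum_ite_eq, Finset.mem_univ, if_true]
  ring

end C


section Final
variable {V : Type*} [Fintype V] {G : SimpleGraph V}

lemma myc_connected (hc : G.Connected) (h2 : 1 < Fintype.card V) :
    (mycielskian G).Connected := by
  have hre : ∀ x : V ⊕ V ⊕ Unit, (mycielskian G).Reachable (Sum.inr (Sum.inr ())) x := by
    intro x
    match x with
    | Sum.inl j =>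
      have := dist_wl (G := G) hc h2 (j := j) (u := ())
      exact SimpleGraph.Reachable.of_dist_ne_zero (by omega)
    | Sum.inr (Sum.inl j) => exact (madj_wu).reachable
    | Sum.inr (Sum.inr ()) => exact SimpleGraph.Reachable.refl _
  exact ⟨fun a b => (hre a).symm.trans (hre b)⟩

lemma sum_ite_diag [DecidableEq V] :
    (∑ i : V, ∑ j : V, if i = j then (1:ℚ) else 0) = (Fintype.card V : ℚ) := by
  simp [Finset.sum_ite_eq]

lemma key4 (d : ℕ) : ((min d 4 : ℕ) : ℚ)
    = 4 * (if d = 0 then 0 else 1) - 3 * (if d = 1 then 1 else 0)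
      - 2 * (if d = 2 then 1 else 0) - (if d = 3 then 1 else 0) := by
  rcases d with _|_|_|_|d
  · norm_num
  · norm_num
  · norm_num
  · norm_num
  · have h4 : min (d + 4) 4 = 4 := by omega
    rw [h4, if_neg (by omega), if_neg (by omega), if_neg (by omega), if_neg (by omega)]
    norm_num

lemma key3 (hc : G.Connected) [DecidableEq V] (i j : V) :
    ((if i = j then 2 else min (G.dist i j) 3 : ℕ) : ℚ)
    = 3 * (if G.dist i j = 0 then 0 else 1) - 2 * (if G.dist i j = 1 then 1 else 0)
      - (if G.dist i j = 2 then 1 else 0) + 2 * (if i = j then 1 else 0) := by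
  by_cases h : i = j
  · simp [h, SimpleGraph.dist_self]
  · have hd : G.dist i j ≠ 0 := fun h0 => h (hc.dist_eq_zero_iff.mp h0)
    rw [if_neg h, if_neg hd, if_neg h]
    rcases hD : G.dist i j with _|_|_|d
    · exact absurd hD hd
    · norm_num
    · norm_num
    · have h3 : min (d + 3) 3 = 3 := by omega
      rw [h3, if_neg (by omega), if_neg (by omega)]
      norm_num

lemma key2 [DecidableEq V] (i j : V) :
    ((if i = j then 0 else 2 : ℕ) : ℚ) = 2 - 2 * (if i = j then 1 else 0) := by
  by_cases h : i = j <;> simp [h]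

end Final

set_option maxHeartbeats 1600000 in
/-- For a connected graph `G` with `n ≥ 2` vertices and `m` edges, with
`a_k = d(G,k)`, the betweenness centrality of `μ(G)` is
`(4n² - 2n - 7m - 4a₂ - a₃)/(2n + 1)`. -/
theorem stmt_16 {V : Type*} [Fintype V] (G : SimpleGraph V) (n m : ℕ)
    (hn : Fintype.card V = n) (hn2 : 2 ≤ n) (hm : Nat.card G.edgeSet = m)
    (hc : G.Connected) :
    btw (mycielskian G) =
      (4 * (n : ℚ) ^ 2 - 2 * n - 7 * m - 4 * distCount G 2 - distCount G 3) /
        (2 * n + 1) := by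
  classical
  have h2 : 1 < Fintype.card V := by omega
  have hcM : (mycielskian G).Connected := myc_connected hc h2
  -- distance formulas
  have Hll : ∀ i j : V, (mycielskian G).dist (Sum.inl i) (Sum.inl j)
      = min (G.dist i j) 4 := by
    intro i j
    by_cases h : i = j
    · subst h; simp [SimpleGraph.dist_self]
    · exact dist_ll hc h2 h
  have Hul : ∀ i j : V, (mycielskian G).dist (Sum.inr (Sum.inl i)) (Sum.inl j)
      = if i = j then 2 else min (G.dist i j) 3 := by
    intro i j
    by_cases h : i = j
    · subst h; simp [dist_uv_same hc h2]
    · simp [h, dist_ul hc h2 h]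
  have Hlu : ∀ i j : V, (mycielskian G).dist (Sum.inl i) (Sum.inr (Sum.inl j))
      = if i = j then 2 else min (G.dist i j) 3 := by
    intro i j
    rw [SimpleGraph.dist_comm, Hul j i]
    by_cases h : i = j
    · simp [h]
    · simp [h, Ne.symm h, G.dist_comm]
  have Huu : ∀ i j : V, (mycielskian G).dist (Sum.inr (Sum.inl i)) (Sum.inr (Sum.inl j))
      = if i = j then 0 else 2 := by
    intro i j
    by_cases h : i = j
    · subst h; simp [SimpleGraph.dist_self]
    · simp [h, dist_uu h]
  have Hwu : ∀ (u : Unit) (i : V),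
      (mycielskian G).dist (Sum.inr (Sum.inr u)) (Sum.inr (Sum.inl i)) = 1 :=
    fun u i => dist_wu
  have Huw : ∀ (i : V) (u : Unit),
      (mycielskian G).dist (Sum.inr (Sum.inl i)) (Sum.inr (Sum.inr u)) = 1 := by
    intro i u; rw [SimpleGraph.dist_comm]; exact dist_wu
  have Hwl : ∀ (u : Unit) (j : V),
      (mycielskian G).dist (Sum.inr (Sum.inr u)) (Sum.inl j) = 2 :=
    fun u j => dist_wl hc h2
  have Hlw : ∀ (j : V) (u : Unit),
      (mycielskian G).dist (Sum.inl j) (Sum.inr (Sum.inr u)) = 2 := by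
    intro j u; rw [SimpleGraph.dist_comm]; exact dist_wl hc h2
  have Hww : ∀ (u u' : Unit),
      (mycielskian G).dist (Sum.inr (Sum.inr u)) (Sum.inr (Sum.inr u')) = 0 := by
    intro u u'; cases u; cases u'; simp [SimpleGraph.dist_self]
  -- counting constants
  set c1 := ((Finset.univ.filter (fun p : V × V => G.dist p.1 p.2 = 1)).card : ℚ) with hc1def
  set c2 := ((Finset.univ.filter (fun p : V × V => G.dist p.1 p.2 = 2)).card : ℚ) with hc2def
  set c3 := ((Finset.univ.filter (fun p : V × V => G.dist p.1 p.2 = 3)).card : ℚ) with hc3def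
  have hc1 : c1 = 2 * m := by
    rw [hc1def, ordered_count one_ne_zero, distCount_one_eq, hm]; push_cast; ring
  have hc2 : c2 = 2 * (distCount G 2 : ℚ) := by
    rw [hc2def, ordered_count two_ne_zero]; push_cast; ring
  have hc3 : c3 = 2 * (distCount G 3 : ℚ) := by
    rw [hc3def, ordered_count three_ne_zero]; push_cast; ring
  have hN : (Fintype.card (V ⊕ V ⊕ Unit) : ℚ) = 2 * n + 1 := by
    simp [Fintype.card_sum, hn]; push_cast; ring
  -- the total distance sum
  have hS : (∑ x : V ⊕ V ⊕ Unit, ∑ y : V ⊕ V ⊕ Unit, ((mycielskian G).dist x y : ℚ))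
      = 12 * (n : ℚ) ^ 2 - 2 * n - 7 * c1 - 4 * c2 - c3 := by
    simp only [Fintype.sum_sum_type, Fintype.sum_unique]
    simp only [Hll, Hul, Hlu, Huu, Hwu, Huw, Hwl, Hlw, Hww]
    simp only [key4, key3 hc, key2, Nat.cast_ofNat, Nat.cast_one, Nat.cast_zero]
    simp only [Finset.sum_add_distrib, Finset.sum_sub_distrib, ← Finset.mul_sum,
      Finset.sum_const, Finset.card_univ, nsmul_eq_mul, smul_eq_mul]
    rw [sum_ite_ne hc, sum_ite_dist 1, sum_ite_dist 2, sum_ite_dist 3, sum_ite_diag]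
    rw [hn]
    ring
  have hNpos : (0:ℚ) < 2 * (n:ℚ) + 1 := by positivity
  rw [btw_eq _ hcM, hS, hN]
  rw [hc1, hc2, hc3]
  field_simp
  ring
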